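/- arXiv:0902.4177 — 3 statements merged into one kernel-verified Lean document; each statement's English description precedes it below -/
import Mathlib

section
/- Let F = 𝔽_2 (ZMod 2) and let C = { (u·(1 + z²), u·z) : u ∈ F[[z]] } ⊆ F[[z]]² be the rate-1/2 convolutional code generated by G(z) = [1 + z², z]. Then d_free(C) = 3. -/
open PowerSeries

/-- Hamming weight of `v ∈ F[[z]]²`: the extended-natural-number cardinality of the set
of pairs `(l, t)` with `coeff_t (v_l) ≠ 0`. -/
noncomputable def wH {F : Type*} [Field F] (v : Fin 2 → PowerSeries F) : ℕ∞ :=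
  {p : Fin 2 × ℕ | PowerSeries.coeff (R := F) p.2 (v p.1) ≠ 0}.encard

lemma coeff_mul_one_add_X_sq (u : PowerSeries (ZMod 2)) (n : ℕ) :
    coeff (R := ZMod 2) n (u * (1 + X ^ 2)) =
      coeff (R := ZMod 2) n u + (if 2 ≤ n then coeff (R := ZMod 2) (n - 2) u else 0) := by
  rw [mul_add, mul_one, map_add, coeff_mul_X_pow']

lemma three_le_wH (u : PowerSeries (ZMod 2)) (hu : u ≠ 0) :
    3 ≤ wH ![u * (1 + X ^ 2), u * X] := by
  have hex : ∃ n, coeff (R := ZMod 2) n u ≠ 0 := by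
    by_contra h
    push_neg at h
    exact hu (PowerSeries.ext fun n => by simpa using h n)
  classical
  set n := Nat.find hex with hn
  have hun : coeff (R := ZMod 2) n u ≠ 0 := Nat.find_spec hex
  have hmin : ∀ m < n, coeff (R := ZMod 2) m u = 0 := fun m hm => by
    by_contra h; exact absurd (Nat.find_le h) (not_le.mpr hm)
  set S : Set (Fin 2 × ℕ) :=
    {p : Fin 2 × ℕ | coeff (R := ZMod 2) p.2 ((![u * (1 + X ^ 2), u * X]) p.1) ≠ 0} with hS
  have h0n : ((0 : Fin 2), n) ∈ S := by
    simp only [hS, Set.mem_setOf_eq, Matrix.cons_val_zero]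
    rw [coeff_mul_one_add_X_sq]
    split_ifs with h
    · rw [hmin (n - 2) (by omega), add_zero]; exact hun
    · rw [add_zero]; exact hun
  have h1n : ((1 : Fin 2), n + 1) ∈ S := by
    simp only [hS, Set.mem_setOf_eq, Matrix.cons_val_one, Matrix.head_cons, Matrix.cons_val_zero]
    rw [coeff_succ_mul_X]; exact hun
  -- third point
  by_cases hc : coeff (R := ZMod 2) (n + 2) u = 0
  · have h3 : ((0 : Fin 2), n + 2) ∈ S := by
      simp only [hS, Set.mem_setOf_eq, Matrix.cons_val_zero]
      rw [coeff_mul_one_add_X_sq, if_pos (by omega)]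
      simpa [hc] using hun
    have hsub : {((0 : Fin 2), n), ((0 : Fin 2), n + 2), ((1 : Fin 2), n + 1)} ⊆ S := by
      intro p hp
      rcases hp with rfl | rfl | rfl
      exacts [h0n, h3, h1n]
    calc (3 : ℕ∞) = ({((0 : Fin 2), n), ((0 : Fin 2), n + 2), ((1 : Fin 2), n + 1)} :
          Set (Fin 2 × ℕ)).encard := by
          rw [Set.encard_insert_of_notMem (by simp), Set.encard_pair (by simp)]; rfl
      _ ≤ S.encard := Set.encard_le_encard hsub

  · have h3 : ((1 : Fin 2), n + 3) ∈ S := by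
      simp only [hS, Set.mem_setOf_eq, Matrix.cons_val_one, Matrix.head_cons, Matrix.cons_val_zero]
      rw [show n + 3 = (n + 2) + 1 by ring, coeff_succ_mul_X]; exact hc
    have hsub : {((0 : Fin 2), n), ((1 : Fin 2), n + 1), ((1 : Fin 2), n + 3)} ⊆ S := by
      intro p hp
      rcases hp with rfl | rfl | rfl
      exacts [h0n, h1n, h3]
    calc (3 : ℕ∞) = ({((0 : Fin 2), n), ((1 : Fin 2), n + 1), ((1 : Fin 2), n + 3)} :
          Set (Fin 2 × ℕ)).encard := by
          rw [Set.encard_insert_of_notMem (by simp), Set.encard_pair (by simp [Prod.ext_iff])]; rfl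
      _ ≤ S.encard := Set.encard_le_encard hsub


lemma wH_one : wH ![(1 : PowerSeries (ZMod 2)) * (1 + X ^ 2), 1 * X] = 3 := by
  have hset : {p : Fin 2 × ℕ |
      coeff (R := ZMod 2) p.2 ((![(1 : PowerSeries (ZMod 2)) * (1 + X ^ 2), 1 * X]) p.1) ≠ 0}
      = {((0 : Fin 2), 0), ((0 : Fin 2), 2), ((1 : Fin 2), 1)} := by
    ext ⟨l, t⟩
    fin_cases l <;>
      simp [PowerSeries.coeff_one, PowerSeries.coeff_X_pow, PowerSeries.coeff_X,
        Prod.ext_iff]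
    constructor
    · intro h
      by_contra h0
      push_neg at h0
      rw [if_neg h0.1, if_neg h0.2] at h
      simp at h
    · rintro (rfl | rfl) <;> decide
  unfold wH
  rw [hset, Set.encard_insert_of_notMem (by decide),
    Set.encard_pair (by decide)]
  rfl

/-- the rate-1/2 convolutional code over `ZMod 2` generated by
`G(z) = [1 + X ^ 2, X]` has free distance `3`. -/
theorem dfree_eq_10 :
    sInf {w : ℕ∞ | ∃ v : Fin 2 → PowerSeries (ZMod 2),
      (∃ u : PowerSeries (ZMod 2), v = ![u * (1 + X ^ 2), u * (X)]) ∧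
      v ≠ 0 ∧ w = wH v} = 3 := by
  apply le_antisymm
  · apply sInf_le
    refine ⟨![(1 : PowerSeries (ZMod 2)) * (1 + X ^ 2), 1 * X], ⟨1, rfl⟩, ?_, wH_one.symm⟩
    intro h
    have := congrFun h 1
    simp only [Matrix.cons_val_one, Matrix.head_cons, one_mul, Pi.zero_apply] at this
    exact X_ne_zero this
  · apply le_sInf
    rintro w ⟨v, ⟨u, rfl⟩, hv, rfl⟩
    have hu : u ≠ 0 := by
      rintro rfl
      apply hv
      funext i
      fin_cases i <;> simp
    exact three_le_wH u hu
end

section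
/- Let F = 𝔽_3 (ZMod 3) and let C = { (u·(1 + z²), u·(1 + z + z²)) : u ∈ F[[z]] } ⊆ F[[z]]² be the rate-1/2 convolutional code generated by G(z) = [1 + z², 1 + z + z²]. Then d_free(C) = 5. -/
open PowerSeries

section Aux

variable {F : Type*} [Field F]

lemma wH_eq (a b : PowerSeries F) :
    wH ![a, b] = {k | coeff (R := F) k a ≠ 0}.encard + {k | coeff (R := F) k b ≠ 0}.encard := by
  have hS : {p : Fin 2 × ℕ | coeff (R := F) p.2 ((![a, b]) p.1) ≠ 0}
      = (Prod.mk 0 '' {k | coeff (R := F) k a ≠ 0}) ∪ (Prod.mk 1 '' {k | coeff (R := F) k b ≠ 0}) := by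
    ext ⟨l, t⟩
    fin_cases l <;> simp [Prod.ext_iff, eq_comm]
  have hinj0 : Function.Injective (Prod.mk (0 : Fin 2) : ℕ → Fin 2 × ℕ) := fun x y h => by
    simpa using congrArg Prod.snd h
  have hinj1 : Function.Injective (Prod.mk (1 : Fin 2) : ℕ → Fin 2 × ℕ) := fun x y h => by
    simpa using congrArg Prod.snd h
  have hdisj : Disjoint (Prod.mk (0 : Fin 2) '' {k | coeff (R := F) k a ≠ 0})
      (Prod.mk (1 : Fin 2) '' {k | coeff (R := F) k b ≠ 0}) := by
    rw [Set.disjoint_iff_forall_ne]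
    rintro _ ⟨x, _, rfl⟩ _ ⟨y, _, rfl⟩ h
    simpa using congrArg Prod.fst h
  rw [wH, hS, Set.encard_union_eq hdisj, hinj0.encard_image, hinj1.encard_image]

lemma coeff_g1 (u : PowerSeries F) (k : ℕ) :
    coeff (R := F) k (u * (1 + X ^ 2)) = coeff (R := F) k u + if 2 ≤ k then coeff (R := F) (k - 2) u else 0 := by
  rw [mul_add, mul_one, map_add, coeff_mul_X_pow']

lemma coeff_g2 (u : PowerSeries F) (k : ℕ) :
    coeff (R := F) k (u * (1 + X + X ^ 2)) = coeff (R := F) k u + (if 1 ≤ k then coeff (R := F) (k - 1) u else 0)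
      + if 2 ≤ k then coeff (R := F) (k - 2) u else 0 := by
  have h : (1 + X + X ^ 2 : PowerSeries F) = 1 + X ^ 1 + X ^ 2 := by ring
  rw [h, mul_add, mul_add, mul_one, map_add, map_add, coeff_mul_X_pow', coeff_mul_X_pow']

lemma coeff_sub (u : PowerSeries F) (k : ℕ) :
    coeff (R := F) (k + 1) (u * (1 + X + X ^ 2)) - coeff (R := F) (k + 1) (u * (1 + X ^ 2)) = coeff (R := F) k u := by
  rw [coeff_g1, coeff_g2]
  have h1 : (1:ℕ) ≤ k + 1 := by omega
  simp only [h1, if_true, Nat.add_sub_cancel]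
  ring

lemma lower_bound (u : PowerSeries F) (hu : u ≠ 0) :
    5 ≤ wH ![u * (1 + X ^ 2), u * (1 + X + X ^ 2)] := by
  classical
  set a := u * (1 + X ^ 2) with ha
  set b := u * (1 + X + X ^ 2) with hb
  have hex : ∃ k, coeff (R := F) k u ≠ 0 := by
    by_contra h
    push_neg at h
    exact hu (PowerSeries.ext fun n => by simpa using h n)
  set n := Nat.find hex with hn_def
  have hn : coeff (R := F) n u ≠ 0 := Nat.find_spec hex
  have hmin : ∀ k < n, coeff (R := F) k u = 0 := fun k hk => by
    by_contra h
    have hle : n ≤ k := Nat.find_le h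
    omega
  set A : Set ℕ := {k | coeff (R := F) k a ≠ 0} with hA
  set B : Set ℕ := {k | coeff (R := F) k b ≠ 0} with hB
  have hwH : wH ![a, b] = A.encard + B.encard := wH_eq a b
  by_contra hlt
  push_neg at hlt
  have h4 : A.encard + B.encard ≤ 4 := by
    rw [← hwH]
    exact Order.le_of_lt_add_one (by rw [show (4:ℕ∞) + 1 = 5 from rfl]; exact hlt)
  have hAfin : A.Finite := by
    rw [← Set.encard_lt_top_iff]
    exact lt_of_le_of_lt (le_trans le_self_add h4) (lt_top_iff_ne_top.mpr (by decide))
  have hBfin : B.Finite := by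
    rw [← Set.encard_lt_top_iff]
    exact lt_of_le_of_lt (le_trans le_add_self h4) (lt_top_iff_ne_top.mpr (by decide))
  have hUsub : {k | coeff (R := F) k u ≠ 0} ⊆ (· + 1) ⁻¹' (A ∪ B) := by
    intro k hk
    by_contra h
    simp only [Set.mem_preimage, Set.mem_union, A, B, Set.mem_setOf_eq, not_or, not_not] at h
    have := coeff_sub u k
    rw [← ha, ← hb, h.1, h.2, sub_zero] at this
    exact hk this.symm
  have hUfin : {k | coeff (R := F) k u ≠ 0}.Finite :=
    Set.Finite.subset ((hAfin.union hBfin).preimage (add_left_injective 1).injOn) hUsub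
  have hnU : n ∈ hUfin.toFinset := by simpa using hn
  set d := hUfin.toFinset.max' ⟨n, hnU⟩ with hd_def
  have hd : coeff (R := F) d u ≠ 0 := by
    have := hUfin.toFinset.max'_mem ⟨n, hnU⟩
    simpa using this
  have hmax : ∀ k, d < k → coeff (R := F) k u = 0 := by
    intro k hk
    by_contra h
    exact absurd (hUfin.toFinset.le_max' k (by simpa using h)) (by omega)
  have hnd : n ≤ d := hUfin.toFinset.le_max' n hnU
  have hna : coeff (R := F) n a = coeff (R := F) n u := by
    rw [ha, coeff_g1]
    split_ifs with h
    · rw [hmin (n - 2) (by omega), add_zero]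
    · rw [add_zero]
  have hnb : coeff (R := F) n b = coeff (R := F) n u := by
    rw [hb, coeff_g2]
    have e1 : (if 1 ≤ n then coeff (R := F) (n - 1) u else 0) = 0 := by
      split_ifs with h
      · exact hmin _ (by omega)
      · rfl
    have e2 : (if 2 ≤ n then coeff (R := F) (n - 2) u else 0) = 0 := by
      split_ifs with h
      · exact hmin _ (by omega)
      · rfl
    rw [e1, e2, add_zero, add_zero]
  have hda : coeff (R := F) (d + 2) a = coeff (R := F) d u := by
    rw [ha, coeff_g1, if_pos (by omega : (2:ℕ) ≤ d + 2), hmax (d + 2) (by omega), zero_add,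
      Nat.add_sub_cancel]
  have hdb : coeff (R := F) (d + 2) b = coeff (R := F) d u := by
    rw [hb, coeff_g2, if_pos (by omega : (1:ℕ) ≤ d + 2), if_pos (by omega : (2:ℕ) ≤ d + 2),
      hmax (d + 2) (by omega), hmax (d + 2 - 1) (by omega), Nat.add_sub_cancel, zero_add,
      zero_add]
  have hsubA : ({n, d + 2} : Set ℕ) ⊆ A := by
    rintro k (rfl | rfl)
    · rw [hA, Set.mem_setOf_eq, hna]; exact hn
    · rw [hA, Set.mem_setOf_eq, hda]; exact hd
  have hsubB : ({n, d + 2} : Set ℕ) ⊆ B := by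
    rintro k (rfl | rfl)
    · rw [hB, Set.mem_setOf_eq, hnb]; exact hn
    · rw [hB, Set.mem_setOf_eq, hdb]; exact hd
  have hpair : ({n, d + 2} : Set ℕ).encard = 2 := Set.encard_pair (by omega)
  have hA2 : 2 ≤ A.encard := hpair ▸ Set.encard_le_encard hsubA
  have hB2 : 2 ≤ B.encard := hpair ▸ Set.encard_le_encard hsubB
  have hAeq : ({n, d + 2} : Set ℕ) = A := by
    apply Set.Finite.eq_of_subset_of_encard_le (Set.toFinite _) hsubA
    rw [hpair]
    by_contra h
    push_neg at h
    have h5 : (5:ℕ∞) ≤ A.encard + B.encard := by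
      calc (5:ℕ∞) = 3 + 2 := by decide
      _ ≤ A.encard + B.encard := add_le_add (Order.add_one_le_of_lt h) hB2
    exact absurd (le_trans h5 h4) (by decide)
  have hBeq : ({n, d + 2} : Set ℕ) = B := by
    apply Set.Finite.eq_of_subset_of_encard_le (Set.toFinite _) hsubB
    rw [hpair]
    by_contra h
    push_neg at h
    have h5 : (5:ℕ∞) ≤ A.encard + B.encard := by
      calc (5:ℕ∞) = 2 + 3 := by decide
      _ ≤ A.encard + B.encard := add_le_add hA2 (Order.add_one_le_of_lt h)
    exact absurd (le_trans h5 h4) (by decide)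
  have hmem : n + 1 ∉ ({n, d + 2} : Set ℕ) := by
    simp only [Set.mem_insert_iff, Set.mem_singleton_iff]
    omega
  have hza : coeff (R := F) (n + 1) a = 0 := by
    by_contra h
    have hmemA : n + 1 ∈ A := by rw [hA, Set.mem_setOf_eq]; exact h
    rw [← hAeq] at hmemA
    exact hmem hmemA
  have hzb : coeff (R := F) (n + 1) b = 0 := by
    by_contra h
    have hmemB : n + 1 ∈ B := by rw [hB, Set.mem_setOf_eq]; exact h
    rw [← hBeq] at hmemB
    exact hmem hmemB
  have hc := coeff_sub u n
  rw [← ha, ← hb, hza, hzb, sub_zero] at hc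
  exact hn hc.symm

end Aux

lemma suppA : {t : ℕ | coeff (R := ZMod 3) t (1 + X ^ 2 : PowerSeries (ZMod 3)) ≠ 0} = {0, 2} := by
  ext t
  simp only [Set.mem_setOf_eq, map_add, coeff_one, coeff_X_pow, Set.mem_insert_iff,
    Set.mem_singleton_iff]
  split_ifs <;> simp_all

lemma suppB : {t : ℕ | coeff (R := ZMod 3) t (1 + X + X ^ 2 : PowerSeries (ZMod 3)) ≠ 0}
    = {0, 1, 2} := by
  ext t
  simp only [Set.mem_setOf_eq, map_add, coeff_one, coeff_X, coeff_X_pow, Set.mem_insert_iff,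
    Set.mem_singleton_iff]
  split_ifs <;> simp_all

/-- the rate-1/2 convolutional code over `ZMod 3` generated by
`G(z) = [1 + X ^ 2, 1 + X + X ^ 2]` has free distance `5`. -/
theorem dfree_eq_12 :
    sInf {w : ℕ∞ | ∃ v : Fin 2 → PowerSeries (ZMod 3),
      (∃ u : PowerSeries (ZMod 3), v = ![u * (1 + X ^ 2), u * (1 + X + X ^ 2)]) ∧
      v ≠ 0 ∧ w = wH v} = 5 := by
  apply le_antisymm
  · apply sInf_le
    refine ⟨![1 * (1 + X ^ 2), 1 * (1 + X + X ^ 2)], ⟨1, rfl⟩, ?_, ?_⟩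
    · intro h
      have h0 := congrFun h 0
      simp only [Matrix.cons_val_zero, one_mul, Pi.zero_apply] at h0
      have h1 := congrArg (PowerSeries.constantCoeff (R := ZMod 3)) h0
      simp at h1
    · have h1 : ![1 * (1 + X ^ 2), 1 * (1 + X + X ^ 2)]
          = ![(1 + X ^ 2 : PowerSeries (ZMod 3)), 1 + X + X ^ 2] := by
        funext i
        fin_cases i <;> simp
      rw [h1, wH_eq, suppA, suppB,
        Set.encard_insert_of_notMem (by simp), Set.encard_singleton,
        Set.encard_insert_of_notMem (by simp), Set.encard_insert_of_notMem (by simp),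
        Set.encard_singleton]
      decide
  · apply le_sInf
    rintro w ⟨v, ⟨u, rfl⟩, hv, rfl⟩
    have hu : u ≠ 0 := by
      rintro rfl
      apply hv
      funext i
      fin_cases i <;> simp
    exact lower_bound u hu
end

section
/- Let F = 𝔽_3 (ZMod 3) and let C = { (u·(2 + z + 2z²), u·(1 + z + z²)) : u ∈ F[[z]] } ⊆ F[[z]]² be the rate-1/2 convolutional code generated by G(z) = [2 + z + 2z², 1 + z + z²]. Then d_free(C) = 6. -/
open PowerSeries

section Aux

abbrev F3 := ZMod 3

/-- shift of a coefficient sequence -/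
def sh (a : ℕ → F3) : ℕ → F3
  | 0 => 0
  | (t+1) => a t

lemma sh_eq (u : PowerSeries F3) (t : ℕ) :
    sh (fun n => coeff (R := F3) n u) t = coeff (R := F3) t (u * X) := by
  cases t with
  | zero => simp [sh]
  | succ t => simp [sh, PowerSeries.coeff_succ_mul_X]

lemma sh2_eq (u : PowerSeries F3) (t : ℕ) :
    sh (sh (fun n => coeff (R := F3) n u)) t = coeff (R := F3) t (u * X ^ 2) := by
  cases t with
  | zero => simp [sh, PowerSeries.coeff_mul_X_pow']
  | succ t =>
    rw [show sh (sh (fun n => coeff (R := F3) n u)) (t+1) = sh (fun n => coeff (R := F3) n u) t from rfl,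
      sh_eq, show u * X ^ 2 = (u * X) * X by ring, PowerSeries.coeff_succ_mul_X]

lemma coeff_mul_g1 (u : PowerSeries F3) (t : ℕ) :
    coeff (R := F3) t (u * (2 + X + 2 * X ^ 2)) =
      2 * coeff (R := F3) t u + sh (fun n => coeff (R := F3) n u) t
        + 2 * sh (sh (fun n => coeff (R := F3) n u)) t := by
  have h2 : (2 : PowerSeries F3) = C (R := F3) 2 := (map_ofNat (C (R := F3)) 2).symm
  rw [mul_add, mul_add, map_add, map_add, h2, mul_comm u (C (R := F3) 2), coeff_C_mul,
    sh_eq, sh2_eq, show u * (C (R := F3) 2 * X ^ 2) = C (R := F3) 2 * (u * X ^ 2) by ring, coeff_C_mul]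

lemma coeff_mul_g2 (u : PowerSeries F3) (t : ℕ) :
    coeff (R := F3) t (u * (1 + X + X ^ 2)) =
      coeff (R := F3) t u + sh (fun n => coeff (R := F3) n u) t
        + sh (sh (fun n => coeff (R := F3) n u)) t := by
  rw [mul_add, mul_add, map_add, map_add, mul_one, sh_eq, sh2_eq]

/-- potential function on trellis states -/
def dd (p q : F3) : ℕ := if p = 0 ∧ q = 0 then 6 else if p = 0 then 4 else if q = 0 then 2 else 3

/-- cost of a trellis transition -/
def cst (i p q : F3) : ℕ :=
  (if 2*i + p + 2*q = 0 then 0 else 1) + (if i + p + q = 0 then 0 else 1)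

lemma cert : ∀ i p q : F3, dd i p ≤ dd p q + cst i p q := by decide
lemma cert0 : ∀ i : F3, i ≠ 0 → dd i 0 ≤ cst i 0 0 := by decide
lemma dd00 : dd 0 0 = 6 := by decide

def cc (a : ℕ → F3) (t : ℕ) : ℕ := cst (a t) (sh a t) (sh (sh a) t)

def W (a : ℕ → F3) (t : ℕ) : ℕ := ∑ s ∈ Finset.range t, cc a s

lemma invariant (a : ℕ → F3) (t : ℕ) :
    (∀ s < t, a s = 0) ∨ dd (sh a t) (sh (sh a) t) ≤ W a t := by
  induction t with
  | zero => exact Or.inl (by omega)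
  | succ t ih =>
    have hW : W a (t+1) = W a t + cc a t := Finset.sum_range_succ _ _
    have hs1 : sh a (t+1) = a t := rfl
    have hs2 : sh (sh a) (t+1) = sh a t := rfl
    rcases ih with hv | hd
    · by_cases hat : a t = 0
      · left; intro s hs
        rcases Nat.lt_succ_iff_lt_or_eq.mp hs with h | h
        · exact hv s h
        · rw [h]; exact hat
      · right
        have e1 : sh a t = 0 := by
          cases t with
          | zero => rfl
          | succ t => exact hv t (Nat.lt_succ_self t)
        have e2 : sh (sh a) t = 0 := by
          cases t with
          | zero => rfl
          | succ t =>
            rw [show sh (sh a) (t+1) = sh a t from rfl]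
            cases t with
            | zero => rfl
            | succ t => exact hv t (by omega)
        rw [hW, hs1, hs2, e1]
        calc dd (a t) 0 ≤ cst (a t) 0 0 := cert0 _ hat
          _ ≤ W a t + cc a t := by
              rw [cc, e1, e2]; omega
    · right
      rw [hW, hs1, hs2]
      calc dd (a t) (sh a t) ≤ dd (sh a t) (sh (sh a) t) + cst (a t) (sh a t) (sh (sh a) t) :=
            cert _ _ _
        _ ≤ W a t + cc a t := by rw [cc]; omega

lemma main_count (a : ℕ → F3) (hne : ∃ n, a n ≠ 0) (T : ℕ) (hT : ∀ s, T ≤ s → a s = 0) :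
    6 ≤ W a (T + 2) := by
  rcases invariant a (T + 2) with hv | hd
  · obtain ⟨n, hn⟩ := hne
    have : n < T := by
      by_contra h
      exact hn (hT n (by omega))
    exact absurd (hv n (by omega)) hn
  · have e1 : sh a (T+2) = 0 := hT (T+1) (by omega)
    have e2 : sh (sh a) (T+2) = 0 := hT T (by omega)
    rw [e1, e2, dd00] at hd
    exact hd

lemma lower (u : PowerSeries F3) (hu : u ≠ 0) :
    6 ≤ wH ![u * (2 + X + 2 * X ^ 2), u * (1 + X + X ^ 2)] := by
  set v : Fin 2 → PowerSeries F3 := ![u * (2 + X + 2 * X ^ 2), u * (1 + X + X ^ 2)] with hv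
  set S : Set (Fin 2 × ℕ) := {p : Fin 2 × ℕ | PowerSeries.coeff (R := F3) p.2 (v p.1) ≠ 0} with hS
  set a : ℕ → F3 := fun n => coeff (R := F3) n u with ha
  have hv0 : v 0 = u * (2 + X + 2 * X ^ 2) := rfl
  have hv1 : v 1 = u * (1 + X + X ^ 2) := rfl
  by_cases hfin : S.Finite
  · have hbdd : BddAbove (Prod.snd '' S) := (hfin.image _).bddAbove
    obtain ⟨T0, hT0⟩ := hbdd
    have hxy : ∀ t, T0 < t → coeff (R := F3) t (v 0) = 0 ∧ coeff (R := F3) t (v 1) = 0 := by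
      intro t ht
      constructor
      · by_contra h
        have hmem : ((0 : Fin 2), t) ∈ S := h
        have := hT0 ⟨((0 : Fin 2), t), hmem, rfl⟩
        omega
      · by_contra h
        have hmem : ((1 : Fin 2), t) ∈ S := h
        have := hT0 ⟨((1 : Fin 2), t), hmem, rfl⟩
        omega
    have hT : ∀ s, T0 + 1 ≤ s → a s = 0 := by
      intro s hs
      have h1 := (hxy (s+1) (by omega)).1
      have h2 := (hxy (s+1) (by omega)).2
      rw [hv0, coeff_mul_g1] at h1
      rw [hv1, coeff_mul_g2] at h2
      have hsh1 : sh (fun n => coeff (R := F3) n u) (s+1) = a s := rfl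
      have hsh2 : sh (sh (fun n => coeff (R := F3) n u)) (s+1) = sh a s := rfl
      rw [hsh1, hsh2] at h1 h2
      have key : ∀ A B C : F3, 2*A + B + 2*C = 0 → A + B + C = 0 → B = 0 := by decide
      exact key _ _ _ h1 h2
    have hne : ∃ n, a n ≠ 0 := by
      by_contra h
      push_neg at h
      exact hu (PowerSeries.ext fun n => h n)
    have h6 : 6 ≤ W a ((T0 + 1) + 2) := main_count a hne (T0+1) hT
    set Ft : Finset (Fin 2 × ℕ) :=
      (Finset.univ ×ˢ Finset.range ((T0+1)+2)).filter
        (fun p : Fin 2 × ℕ => coeff (R := F3) p.2 (v p.1) ≠ 0) with hFt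
    have hcard : Ft.card = W a ((T0+1)+2) := by
      rw [hFt, Finset.card_filter, Finset.sum_product_right]
      rw [W]
      refine Finset.sum_congr rfl (fun t _ => ?_)
      rw [Fin.sum_univ_two, hv0, hv1, coeff_mul_g1, coeff_mul_g2, cc, cst]
      by_cases h1 : 2 * a t + sh a t + 2 * sh (sh a) t = 0 <;>
        by_cases h2 : a t + sh a t + sh (sh a) t = 0 <;>
        simp [h1, h2, ha]
    have hsub : ↑Ft ⊆ S := by
      intro p hp
      rw [hFt] at hp
      simp only [Finset.coe_filter, Set.mem_setOf_eq] at hp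
      exact hp.2
    calc (6 : ℕ∞) ≤ (Ft.card : ℕ∞) := by
          rw [hcard]; exact_mod_cast h6
      _ = (↑Ft : Set (Fin 2 × ℕ)).encard := (Set.encard_coe_eq_coe_finsetCard Ft).symm
      _ ≤ S.encard := Set.encard_mono hsub
  · rw [wH, ← hS, Set.Infinite.encard_eq hfin]
    exact le_top

lemma coeff_one' (n : ℕ) : coeff (R := F3) n (1 : PowerSeries F3) = if n = 0 then 1 else 0 :=
  PowerSeries.coeff_one n

set_option linter.unreachableTactic false in
set_option linter.unusedTactic false in
set_option linter.unnecessarySeqFocus false in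
lemma upper : wH ![(1 : PowerSeries F3) * (2 + X + 2 * X ^ 2), 1 * (1 + X + X ^ 2)] = 6 := by
  set v : Fin 2 → PowerSeries F3 := ![1 * (2 + X + 2 * X ^ 2), 1 * (1 + X + X ^ 2)] with hv
  have key : ∀ (l : Fin 2) (t : ℕ), coeff (R := F3) t (v l) ≠ 0 ↔ t < 3 := by
    intro l t
    have e1 : coeff (R := F3) t (v 0) = 2 * coeff (R := F3) t (1:PowerSeries F3)
        + sh (fun n => coeff (R := F3) n (1:PowerSeries F3)) t
        + 2 * sh (sh (fun n => coeff (R := F3) n (1:PowerSeries F3))) t := coeff_mul_g1 1 t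
    have e2 : coeff (R := F3) t (v 1) = coeff (R := F3) t (1:PowerSeries F3)
        + sh (fun n => coeff (R := F3) n (1:PowerSeries F3)) t
        + sh (sh (fun n => coeff (R := F3) n (1:PowerSeries F3))) t := coeff_mul_g2 1 t
    fin_cases l
    · rw [show (⟨0, by omega⟩ : Fin 2) = 0 from rfl, e1]
      match t with
      | 0 => simp [sh, coeff_one'] <;> decide
      | 1 => simp [sh, coeff_one'] <;> decide
      | 2 => simp [sh, coeff_one'] <;> decide
      | (n+3) => simp [sh, coeff_one']
    · rw [show (⟨1, by omega⟩ : Fin 2) = 1 from rfl, e2]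
      match t with
      | 0 => simp [sh, coeff_one'] <;> decide
      | 1 => simp [sh, coeff_one'] <;> decide
      | 2 => simp [sh, coeff_one'] <;> decide
      | (n+3) => simp [sh, coeff_one']
  have hset : {p : Fin 2 × ℕ | coeff (R := F3) p.2 (v p.1) ≠ 0}
      = ↑((Finset.univ : Finset (Fin 2)) ×ˢ Finset.range 3) := by
    ext ⟨l, t⟩
    simp [key l t]
  rw [wH, hset, Set.encard_coe_eq_coe_finsetCard]
  rfl

end Aux

/-- the rate-1/2 convolutional code over `ZMod 3` generated by
`G(z) = [2 + X + 2 * X ^ 2, 1 + X + X ^ 2]` has free distance `6`. -/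
theorem dfree_eq_13 :
    sInf {w : ℕ∞ | ∃ v : Fin 2 → PowerSeries (ZMod 3),
      (∃ u : PowerSeries (ZMod 3), v = ![u * (2 + X + 2 * X ^ 2), u * (1 + X + X ^ 2)]) ∧
      v ≠ 0 ∧ w = wH v} = 6 := by
  apply le_antisymm
  · apply sInf_le
    refine ⟨![(1 : PowerSeries F3) * (2 + X + 2 * X ^ 2), 1 * (1 + X + X ^ 2)],
      ⟨1, rfl⟩, ?_, upper.symm⟩
    intro h
    have h0 := congrFun h 0
    have h1 : (1 : PowerSeries F3) * (2 + X + 2 * X ^ 2) = 0 := h0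
    have h2 := congrArg (coeff (R := F3) 0) h1
    rw [coeff_mul_g1] at h2
    simp [sh, coeff_one'] at h2
    exact absurd h2 (by decide)
  · apply le_sInf
    rintro w ⟨v, ⟨u, rfl⟩, hvne, rfl⟩
    have hu : u ≠ 0 := by
      rintro rfl
      apply hvne
      funext i
      fin_cases i <;> simp
    exact lower u hu
end
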